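/- For every integer n ≥ 1 and every z ∈ ℂ, p n z = n · Σ (z^α · (−conj(z))^β · (α+β+γ−1)! / (α!·β!·γ!)), where the sum ranges over all triples (α, β, γ) of natural numbers satisfying α + 2β + 3γ = n. -/
import Mathlib


open Complex ComplexConjugate

/-- `p 0 z = 3`, `p 1 z = z`, `p 2 z = z² − 2·conj z`, and
`p n z = z·p (n−1) z − conj z·p (n−2) z + p (n−3) z` for `n ≥ 3`. -/
noncomputable def p : ℕ → ℂ → ℂ
  | 0, _ => 3
  | 1, z => z
  | 2, z => z ^ 2 - 2 * conj z
  | (n + 3), z => z * p (n + 2) z - conj z * p (n + 1) z + p n z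

namespace PAux
open Finset

lemma p_rec (n : ℕ) (z : ℂ) :
    p (n + 3) z = z * p (n + 2) z - conj z * p (n + 1) z + p n z := rfl

noncomputable def cc (t : ℕ × ℕ × ℕ) : ℂ :=
  ((t.1 + t.2.1 + t.2.2 - 1).factorial : ℂ) /
    ((t.1.factorial : ℂ) * (t.2.1.factorial : ℂ) * (t.2.2.factorial : ℂ))

def A (m : ℕ) : Finset (ℕ × ℕ × ℕ) :=
  ((Finset.range (m + 1) ×ˢ Finset.range (m + 1) ×ˢ Finset.range (m + 1)).filter
    (fun t => t.1 + 2 * t.2.1 + 3 * t.2.2 = m))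

lemma mem_A {m : ℕ} {t : ℕ × ℕ × ℕ} : t ∈ A m ↔ t.1 + 2 * t.2.1 + 3 * t.2.2 = m := by
  simp only [A, mem_filter, mem_product, mem_range]
  constructor
  · rintro ⟨_, h⟩; exact h
  · intro h; exact ⟨⟨by omega, by omega, by omega⟩, h⟩

noncomputable def S (z : ℂ) (m : ℕ) : ℂ :=
  ∑ t ∈ A m, cc t * z ^ t.1 * (-(conj z)) ^ t.2.1

lemma cc_eq (t : ℕ × ℕ × ℕ) (num den : ℕ) (hden : den ≠ 0)
    (h : (t.1 + t.2.1 + t.2.2 - 1).factorial * den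
        = num * (t.1.factorial * t.2.1.factorial * t.2.2.factorial)) :
    cc t = (num : ℂ) / (den : ℂ) := by
  have hf : ∀ k : ℕ, (k.factorial : ℂ) ≠ 0 := fun k => Nat.cast_ne_zero.mpr k.factorial_ne_zero
  rw [cc, div_eq_div_iff (mul_ne_zero (mul_ne_zero (hf _) (hf _)) (hf _))
    (Nat.cast_ne_zero.mpr hden)]
  exact_mod_cast h

lemma den_ne (x y z : ℕ) : x.factorial * (y.factorial * z.factorial) ≠ 0 :=
  Nat.mul_ne_zero (Nat.factorial_ne_zero _)
    (Nat.mul_ne_zero (Nat.factorial_ne_zero _) (Nat.factorial_ne_zero _))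

lemma key_id (n a b g : ℕ) (hn : 1 ≤ n) (ht : a + 2 * b + 3 * g = n + 3) :
    ((n : ℂ) + 3) * cc (a, b, g) =
      (if a ≠ 0 then ((n : ℂ) + 2) * cc (a - 1, b, g) else 0)
    + (if b ≠ 0 then ((n : ℂ) + 1) * cc (a, b - 1, g) else 0)
    + (if g ≠ 0 then (n : ℂ) * cc (a, b, g - 1) else 0) := by
  match a, b, g with
  | a+1, b+1, g+1 =>
    obtain rfl : n = a + 2*b + 3*g + 3 := by omega
    rw [if_pos (by omega : a+1 ≠ 0), if_pos (by omega : b+1 ≠ 0), if_pos (by omega : g+1 ≠ 0)]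
    simp only [Nat.add_sub_cancel]
    set D := (a+1).factorial * ((b+1).factorial * (g+1).factorial) with hDdef
    have hD : D ≠ 0 := den_ne _ _ _
    rw [cc_eq (a+1,b+1,g+1) ((a+b+g+2).factorial) D hD
          (by rw [show a+1+(b+1)+(g+1)-1 = a+b+g+2 by omega, hDdef]; ring),
        cc_eq (a,b+1,g+1) ((a+1)*(a+b+g+1).factorial) D hD
          (by rw [show a+(b+1)+(g+1)-1 = a+b+g+1 by omega, hDdef, Nat.factorial_succ a]; ring),
        cc_eq (a+1,b,g+1) ((b+1)*(a+b+g+1).factorial) D hD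
          (by rw [show a+1+b+(g+1)-1 = a+b+g+1 by omega, hDdef, Nat.factorial_succ b]; ring),
        cc_eq (a+1,b+1,g) ((g+1)*(a+b+g+1).factorial) D hD
          (by rw [show a+1+(b+1)+g-1 = a+b+g+1 by omega, hDdef, Nat.factorial_succ g]; ring)]
    have hnum : ((a+2*b+3*g+3)+3) * (a+b+g+2).factorial
        = ((a+2*b+3*g+3)+2) * ((a+1)*(a+b+g+1).factorial)
          + ((a+2*b+3*g+3)+1) * ((b+1)*(a+b+g+1).factorial)
          + (a+2*b+3*g+3) * ((g+1)*(a+b+g+1).factorial) := by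
      have hf : (a+b+g+2).factorial = (a+b+g+2) * (a+b+g+1).factorial :=
        Nat.factorial_succ (a+b+g+1)
      rw [hf]; ring
    have hc : ((((a+2*b+3*g+3)+3) * (a+b+g+2).factorial : ℕ) : ℂ)
        = ((((a+2*b+3*g+3)+2) * ((a+1)*(a+b+g+1).factorial)
          + ((a+2*b+3*g+3)+1) * ((b+1)*(a+b+g+1).factorial)
          + (a+2*b+3*g+3) * ((g+1)*(a+b+g+1).factorial) : ℕ) : ℂ) :=
      congrArg (Nat.cast : ℕ → ℂ) hnum
    push_cast at hc ⊢
    linear_combination hc / (D : ℂ)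
  | a+1, b+1, 0 =>
    obtain rfl : n = a + 2*b := by omega
    rw [if_pos (by omega : a+1 ≠ 0), if_pos (by omega : b+1 ≠ 0),
        if_neg (by omega : ¬ (0:ℕ) ≠ 0), add_zero]
    simp only [Nat.add_sub_cancel]
    set D := (a+1).factorial * ((b+1).factorial * (0).factorial) with hDdef
    have hD : D ≠ 0 := den_ne _ _ _
    rw [cc_eq (a+1,b+1,0) ((a+b+1).factorial) D hD
          (by rw [show a+1+(b+1)+0-1 = a+b+1 by omega, hDdef]; ring),
        cc_eq (a,b+1,0) ((a+1)*(a+b).factorial) D hD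
          (by rw [show a+(b+1)+0-1 = a+b by omega, hDdef, Nat.factorial_succ a]; ring),
        cc_eq (a+1,b,0) ((b+1)*(a+b).factorial) D hD
          (by rw [show a+1+b+0-1 = a+b by omega, hDdef, Nat.factorial_succ b]; ring)]
    have hnum : ((a+2*b)+3) * (a+b+1).factorial
        = ((a+2*b)+2) * ((a+1)*(a+b).factorial)
          + ((a+2*b)+1) * ((b+1)*(a+b).factorial) := by
      rw [Nat.factorial_succ (a+b)]; ring
    have hc : ((((a+2*b)+3) * (a+b+1).factorial : ℕ) : ℂ)
        = ((((a+2*b)+2) * ((a+1)*(a+b).factorial)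
          + ((a+2*b)+1) * ((b+1)*(a+b).factorial) : ℕ) : ℂ) :=
      congrArg (Nat.cast : ℕ → ℂ) hnum
    push_cast at hc ⊢
    linear_combination hc / (D : ℂ)
  | a+1, 0, g+1 =>
    obtain rfl : n = a + 3*g + 1 := by omega
    rw [if_pos (by omega : a+1 ≠ 0), if_pos (by omega : g+1 ≠ 0),
        if_neg (by omega : ¬ (0:ℕ) ≠ 0)]
    simp only [Nat.add_sub_cancel, add_zero, zero_add]
    set D := (a+1).factorial * ((0).factorial * (g+1).factorial) with hDdef
    have hD : D ≠ 0 := den_ne _ _ _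
    rw [cc_eq (a+1,0,g+1) ((a+g+1).factorial) D hD
          (by rw [show a+1+0+(g+1)-1 = a+g+1 by omega, hDdef]; ring),
        cc_eq (a,0,g+1) ((a+1)*(a+g).factorial) D hD
          (by rw [show a+0+(g+1)-1 = a+g by omega, hDdef, Nat.factorial_succ a]; ring),
        cc_eq (a+1,0,g) ((g+1)*(a+g).factorial) D hD
          (by rw [show a+1+0+g-1 = a+g by omega, hDdef, Nat.factorial_succ g]; ring)]
    have hnum : ((a+3*g+1)+3) * (a+g+1).factorial
        = ((a+3*g+1)+2) * ((a+1)*(a+g).factorial)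
          + (a+3*g+1) * ((g+1)*(a+g).factorial) := by
      rw [Nat.factorial_succ (a+g)]; ring
    have hc : ((((a+3*g+1)+3) * (a+g+1).factorial : ℕ) : ℂ)
        = ((((a+3*g+1)+2) * ((a+1)*(a+g).factorial)
          + (a+3*g+1) * ((g+1)*(a+g).factorial) : ℕ) : ℂ) :=
      congrArg (Nat.cast : ℕ → ℂ) hnum
    push_cast at hc ⊢
    linear_combination hc / (D : ℂ)
  | 0, b+1, g+1 =>
    obtain rfl : n = 2*b + 3*g + 2 := by omega
    rw [if_pos (by omega : b+1 ≠ 0), if_pos (by omega : g+1 ≠ 0),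
        if_neg (by omega : ¬ (0:ℕ) ≠ 0), zero_add]
    simp only [Nat.add_sub_cancel]
    set D := (0).factorial * ((b+1).factorial * (g+1).factorial) with hDdef
    have hD : D ≠ 0 := den_ne _ _ _
    rw [cc_eq (0,b+1,g+1) ((b+g+1).factorial) D hD
          (by rw [show 0+(b+1)+(g+1)-1 = b+g+1 by omega, hDdef]; ring),
        cc_eq (0,b,g+1) ((b+1)*(b+g).factorial) D hD
          (by rw [show 0+b+(g+1)-1 = b+g by omega, hDdef, Nat.factorial_succ b]; ring),
        cc_eq (0,b+1,g) ((g+1)*(b+g).factorial) D hD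
          (by rw [show 0+(b+1)+g-1 = b+g by omega, hDdef, Nat.factorial_succ g]; ring)]
    have hnum : ((2*b+3*g+2)+3) * (b+g+1).factorial
        = ((2*b+3*g+2)+1) * ((b+1)*(b+g).factorial)
          + (2*b+3*g+2) * ((g+1)*(b+g).factorial) := by
      rw [Nat.factorial_succ (b+g)]; ring
    have hc : ((((2*b+3*g+2)+3) * (b+g+1).factorial : ℕ) : ℂ)
        = ((((2*b+3*g+2)+1) * ((b+1)*(b+g).factorial)
          + (2*b+3*g+2) * ((g+1)*(b+g).factorial) : ℕ) : ℂ) :=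
      congrArg (Nat.cast : ℕ → ℂ) hnum
    push_cast at hc ⊢
    linear_combination hc / (D : ℂ)
  | a+1, 0, 0 =>
    obtain rfl : a = n + 2 := by omega
    rw [if_pos (by omega : n+2+1 ≠ 0), if_neg (by omega : ¬ (0:ℕ) ≠ 0),
        if_neg (by omega : ¬ (0:ℕ) ≠ 0), add_zero, add_zero]
    simp only [Nat.add_sub_cancel]
    set D := (n+3).factorial * ((0).factorial * (0).factorial) with hDdef
    have hD : D ≠ 0 := den_ne _ _ _
    rw [show n+2+1 = n+3 by omega]
    rw [cc_eq (n+3,0,0) ((n+2).factorial) D hD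
          (by rw [show n+3+0+0-1 = n+2 by omega, hDdef]; ring),
        cc_eq (n+2,0,0) ((n+3)*(n+1).factorial) D hD
          (by rw [show n+2+0+0-1 = n+1 by omega, hDdef,
                  show (n+3).factorial = (n+3)*((n+2)*(n+1).factorial) by
                    rw [← Nat.factorial_succ (n+1), ← Nat.factorial_succ (n+2)],
                  Nat.factorial_succ (n+1)]; ring)]
    have hnum : (n+3) * (n+2).factorial = (n+2) * ((n+3)*(n+1).factorial) := by
      rw [Nat.factorial_succ (n+1)]; ring
    have hc : (((n+3) * (n+2).factorial : ℕ) : ℂ)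
        = (((n+2) * ((n+3)*(n+1).factorial) : ℕ) : ℂ) :=
      congrArg (Nat.cast : ℕ → ℂ) hnum
    push_cast at hc ⊢
    linear_combination hc / (D : ℂ)
  | 0, b+1, 0 =>
    obtain ⟨m, rfl⟩ : ∃ m, b = m + 1 := ⟨b - 1, by omega⟩
    obtain rfl : n = 2 * m + 1 := by omega
    rw [if_pos (by omega : m+1+1 ≠ 0), if_neg (by omega : ¬ (0:ℕ) ≠ 0),
        if_neg (by omega : ¬ (0:ℕ) ≠ 0), add_zero, zero_add]
    simp only [Nat.add_sub_cancel]
    set D := (0).factorial * ((m+2).factorial * (0).factorial) with hDdef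
    have hD : D ≠ 0 := den_ne _ _ _
    rw [show m+1+1 = m+2 by omega]
    rw [cc_eq (0,m+2,0) ((m+1).factorial) D hD
          (by rw [show 0+(m+2)+0-1 = m+1 by omega, hDdef]; ring),
        cc_eq (0,m+1,0) ((m+2)*(m).factorial) D hD
          (by rw [show 0+(m+1)+0-1 = m by omega, hDdef,
                  show (m+2).factorial = (m+2)*((m+1)*(m).factorial) by
                    rw [← Nat.factorial_succ m, ← Nat.factorial_succ (m+1)],
                  Nat.factorial_succ m]; ring)]
    have hnum : ((2*m+1)+3) * (m+1).factorial = ((2*m+1)+1) * ((m+2)*(m).factorial) := by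
      rw [Nat.factorial_succ m]; ring
    have hc : ((((2*m+1)+3) * (m+1).factorial : ℕ) : ℂ)
        = ((((2*m+1)+1) * ((m+2)*(m).factorial) : ℕ) : ℂ) :=
      congrArg (Nat.cast : ℕ → ℂ) hnum
    push_cast at hc ⊢
    linear_combination hc / (D : ℂ)
  | 0, 0, g+1 =>
    obtain ⟨m, rfl⟩ : ∃ m, g = m + 1 := ⟨g - 1, by omega⟩
    obtain rfl : n = 3*m + 3 := by omega
    rw [if_pos (by omega : m+1+1 ≠ 0), if_neg (by omega : ¬ (0:ℕ) ≠ 0),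
        if_neg (by omega : ¬ (0:ℕ) ≠ 0), zero_add, zero_add]
    simp only [Nat.add_sub_cancel]
    set D := (0).factorial * ((0).factorial * (m+2).factorial) with hDdef
    have hD : D ≠ 0 := den_ne _ _ _
    rw [show m+1+1 = m+2 by omega]
    rw [cc_eq (0,0,m+2) ((m+1).factorial) D hD
          (by rw [show 0+0+(m+2)-1 = m+1 by omega, hDdef]; ring),
        cc_eq (0,0,m+1) ((m+2)*(m).factorial) D hD
          (by rw [show 0+0+(m+1)-1 = m by omega, hDdef,
                  show (m+2).factorial = (m+2)*((m+1)*(m).factorial) by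
                    rw [← Nat.factorial_succ m, ← Nat.factorial_succ (m+1)],
                  Nat.factorial_succ m]; ring)]
    have hnum : ((3*m+3)+3) * (m+1).factorial = (3*m+3) * ((m+2)*(m).factorial) := by
      rw [Nat.factorial_succ m]; ring
    have hc : ((((3*m+3)+3) * (m+1).factorial : ℕ) : ℂ)
        = (((3*m+3) * ((m+2)*(m).factorial) : ℕ) : ℂ) :=
      congrArg (Nat.cast : ℕ → ℂ) hnum
    push_cast at hc ⊢
    linear_combination hc / (D : ℂ)
  | 0, 0, 0 => omega

end PAux
namespace PAux
open Finset

lemma filt1 (m : ℕ) : (A (m+1)).filter (fun t => t.1 ≠ 0)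
    = (A m).image (fun t => (t.1 + 1, t.2.1, t.2.2)) := by
  ext t
  obtain ⟨x, y, w⟩ := t
  simp only [mem_filter, mem_image, mem_A, ne_eq, Prod.mk.injEq]
  constructor
  · rintro ⟨h1, h2⟩
    refine ⟨(x - 1, y, w), ?_, ?_, ?_, ?_⟩ <;> dsimp only <;> omega
  · rintro ⟨⟨u, v, s⟩, hu, h1, h2, h3⟩
    dsimp only at hu h1 h2 h3
    constructor <;> omega

lemma filt2 (m : ℕ) : (A (m+2)).filter (fun t => t.2.1 ≠ 0)
    = (A m).image (fun t => (t.1, t.2.1 + 1, t.2.2)) := by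
  ext t
  obtain ⟨x, y, w⟩ := t
  simp only [mem_filter, mem_image, mem_A, ne_eq, Prod.mk.injEq]
  constructor
  · rintro ⟨h1, h2⟩
    refine ⟨(x, y - 1, w), ?_, ?_, ?_, ?_⟩ <;> dsimp only <;> omega
  · rintro ⟨⟨u, v, s⟩, hu, h1, h2, h3⟩
    dsimp only at hu h1 h2 h3
    constructor <;> omega

lemma filt3 (m : ℕ) : (A (m+3)).filter (fun t => t.2.2 ≠ 0)
    = (A m).image (fun t => (t.1, t.2.1, t.2.2 + 1)) := by
  ext t
  obtain ⟨x, y, w⟩ := t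
  simp only [mem_filter, mem_image, mem_A, ne_eq, Prod.mk.injEq]
  constructor
  · rintro ⟨h1, h2⟩
    refine ⟨(x, y, w - 1), ?_, ?_, ?_, ?_⟩ <;> dsimp only <;> omega
  · rintro ⟨⟨u, v, s⟩, hu, h1, h2, h3⟩
    dsimp only at hu h1 h2 h3
    constructor <;> omega

lemma sum1 (m : ℕ) (f : ℕ × ℕ × ℕ → ℂ) :
    ∑ t ∈ (A (m+1)).filter (fun t => t.1 ≠ 0), f t
      = ∑ t ∈ A m, f (t.1 + 1, t.2.1, t.2.2) := by
  rw [filt1, Finset.sum_image]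
  rintro ⟨x1,x2,x3⟩ hx ⟨y1,y2,y3⟩ hy h
  simp only [Prod.mk.injEq] at h ⊢
  omega

lemma sum2 (m : ℕ) (f : ℕ × ℕ × ℕ → ℂ) :
    ∑ t ∈ (A (m+2)).filter (fun t => t.2.1 ≠ 0), f t
      = ∑ t ∈ A m, f (t.1, t.2.1 + 1, t.2.2) := by
  rw [filt2, Finset.sum_image]
  rintro ⟨x1,x2,x3⟩ hx ⟨y1,y2,y3⟩ hy h
  simp only [Prod.mk.injEq] at h ⊢
  omega

lemma sum3 (m : ℕ) (f : ℕ × ℕ × ℕ → ℂ) :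
    ∑ t ∈ (A (m+3)).filter (fun t => t.2.2 ≠ 0), f t
      = ∑ t ∈ A m, f (t.1, t.2.1, t.2.2 + 1) := by
  rw [filt3, Finset.sum_image]
  rintro ⟨x1,x2,x3⟩ hx ⟨y1,y2,y3⟩ hy h
  simp only [Prod.mk.injEq] at h ⊢
  omega

lemma S_rec (n : ℕ) (hn : 1 ≤ n) (z : ℂ) :
    ((n : ℂ) + 3) * S z (n+3)
      = z * (((n : ℂ) + 2) * S z (n+2))
        - conj z * (((n : ℂ) + 1) * S z (n+1))
        + (n : ℂ) * S z n := by
  have step : ((n : ℂ) + 3) * S z (n+3)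
      = (∑ t ∈ (A (n+3)).filter (fun t => t.1 ≠ 0),
          (((n:ℂ)+2) * cc (t.1-1, t.2.1, t.2.2)) * (z^t.1 * (-(conj z))^t.2.1))
      + (∑ t ∈ (A (n+3)).filter (fun t => t.2.1 ≠ 0),
          (((n:ℂ)+1) * cc (t.1, t.2.1-1, t.2.2)) * (z^t.1 * (-(conj z))^t.2.1))
      + (∑ t ∈ (A (n+3)).filter (fun t => t.2.2 ≠ 0),
          ((n:ℂ) * cc (t.1, t.2.1, t.2.2-1)) * (z^t.1 * (-(conj z))^t.2.1)) := by
    rw [S, mul_sum, sum_filter, sum_filter, sum_filter, ← sum_add_distrib, ← sum_add_distrib]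
    refine sum_congr rfl fun t ht => ?_
    obtain ⟨a, b, g⟩ := t
    have h := key_id n a b g hn (mem_A.mp ht)
    calc ((n:ℂ)+3) * (cc (a,b,g) * z^a * (-(conj z))^b)
        = (((n:ℂ)+3) * cc (a,b,g)) * (z^a * (-(conj z))^b) := by ring
      _ = _ := by rw [h]; simp only [add_mul, ite_mul, zero_mul]
  rw [step, sum1 (n+2), sum2 (n+1), sum3 n]
  simp only [S]
  simp only [Nat.add_sub_cancel]
  rw [sub_eq_add_neg]
  congr 1
  congr 1
  · rw [mul_sum, mul_sum]
    refine sum_congr rfl fun t ht => ?_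
    obtain ⟨a, b, g⟩ := t
    dsimp only
    ring
  · rw [mul_sum, mul_sum, ← sum_neg_distrib]
    refine sum_congr rfl fun t ht => ?_
    obtain ⟨a, b, g⟩ := t
    dsimp only
    ring
  · rw [mul_sum]
    refine sum_congr rfl fun t ht => ?_
    obtain ⟨a, b, g⟩ := t
    dsimp only
    ring

end PAux
namespace PAux
open Finset

lemma S1 (z : ℂ) : ((1:ℕ) : ℂ) * S z 1 = z := by
  rw [S, show A 1 = {(1,0,0)} from by decide, sum_singleton]
  simp [cc, Nat.factorial]

lemma S2 (z : ℂ) : ((2:ℕ) : ℂ) * S z 2 = z ^ 2 - 2 * conj z := by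
  rw [S, show A 2 = {(2,0,0),(0,1,0)} from by decide,
    sum_insert (by decide), sum_singleton]
  simp only [cc, Nat.factorial]
  norm_num
  ring

lemma S3 (z : ℂ) : ((3:ℕ) : ℂ) * S z 3 = z * (z ^ 2 - 2 * conj z) - conj z * z + 3 := by
  rw [S, show A 3 = {(3,0,0),(1,1,0),(0,0,1)} from by decide,
    sum_insert (by decide), sum_insert (by decide), sum_singleton]
  simp only [cc, Nat.factorial]
  norm_num
  ring

lemma main (z : ℂ) : ∀ n : ℕ, p (n+1) z = ((n+1 : ℕ) : ℂ) * S z (n+1) := by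
  intro n
  induction n using Nat.strong_induction_on with
  | _ n ih =>
    match n with
    | 0 => exact (S1 z).symm
    | 1 => exact (S2 z).symm
    | 2 =>
      show z * (z ^ 2 - 2 * conj z) - conj z * z + 3 = _
      exact (S3 z).symm
    | (m+3) =>
      have h1 := ih (m+2) (by omega)
      have h2 := ih (m+1) (by omega)
      have h3 := ih m (by omega)
      have hr := S_rec (m+1) (by omega) z
      rw [show m+1+3 = m+3+1 by omega, show m+1+2 = m+2+1 by omega] at hr
      show p ((m+1)+3) z = _
      rw [p_rec (m+1) z, show m+1+2 = m+2+1 by omega, h1, h2, h3]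
      push_cast at hr ⊢
      linear_combination -hr

end PAux

/-- Explicit summation formula: for `n ≥ 1`,
`p n z = n · Σ_{α+2β+3γ=n} ((α+β+γ−1)!/(α!·β!·γ!)) · z^α · (−conj z)^β`. -/
theorem p_sum_formula (n : ℕ) (hn : 1 ≤ n) (z : ℂ) :
    p n z = (n : ℂ) *
      ∑ t ∈ (Finset.range (n + 1) ×ˢ Finset.range (n + 1) ×ˢ Finset.range (n + 1)).filter
          (fun t => t.1 + 2 * t.2.1 + 3 * t.2.2 = n),
        (((t.1 + t.2.1 + t.2.2 - 1).factorial : ℂ) /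
            ((t.1.factorial : ℂ) * (t.2.1.factorial : ℂ) * (t.2.2.factorial : ℂ))) *
          z ^ t.1 * (-(conj z)) ^ t.2.1 := by
  obtain ⟨m, rfl⟩ := Nat.exists_eq_add_of_le hn
  rw [show 1 + m = m + 1 by omega]
  exact PAux.main z m
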